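/- (Compatibility of adjacent residual polynomials on the ramification polygon) Let f ∈ O_K[x] be Eisenstein with ramification polygon R with segments S_1, ..., S_ℓ (ordered left to right) and residual polynomials A_1, ..., A_ℓ ∈ κ[x]. Then the residual polynomial A_ℓ of the rightmost segment is monic, and for 1 ≤ i ≤ ℓ−1 the leading coefficient of A_i equals the constant coefficient of A_{i+1}. -/

import Mathlib

open Polynomial

/-- An additive valuation `v` (written additively, with `v 0 = ⊤`) on a field `Ω`,
extending the `p`-adic valuation of `ℚ_[p]` (scaled by the ramification index `e`),
taking integer values on an intermediate field `K` and normalized so that a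
uniformizer `unif` of `K` has valuation `1`. -/
structure PadicSetup (p : ℕ) [Fact p.Prime] (K Ω : Type*) [Field K] [Field Ω]
    [Algebra ℚ_[p] K] [Algebra ℚ_[p] Ω] [Algebra K Ω] [IsScalarTower ℚ_[p] K Ω] where
  v : Ω → WithTop ℚ
  v_top_iff : ∀ x : Ω, v x = ⊤ ↔ x = 0
  v_mul : ∀ x y : Ω, v (x * y) = v x + v y
  v_add : ∀ x y : Ω, min (v x) (v y) ≤ v (x + y)
  e : ℕ
  e_pos : 0 < e
  v_padic : ∀ x : ℚ_[p], x ≠ 0 →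
    v (algebraMap ℚ_[p] Ω x) = (((e : ℤ) * x.valuation : ℤ) : ℚ)
  v_int : ∀ x : K, x ≠ 0 → ∃ m : ℤ, v (algebraMap K Ω x) = ((m : ℚ) : WithTop ℚ)
  unif : K
  v_unif : v (algebraMap K Ω unif) = 1

variable {p : ℕ} [Fact p.Prime] {K Ω : Type*} [Field K] [Field Ω]
    [Algebra ℚ_[p] K] [Algebra ℚ_[p] Ω] [Algebra K Ω] [IsScalarTower ℚ_[p] K Ω]

/-- `f` is an Eisenstein polynomial of degree `n` over `K` (with respect to the
normalized valuation of `K`): monic of degree `n`, all lower coefficients have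
valuation at least `1`, and the constant coefficient has valuation exactly `1`. -/
def PadicSetup.IsEisensteinOfDegree (S : PadicSetup p K Ω) (f : K[X]) (n : ℕ) : Prop :=
  f.Monic ∧ f.natDegree = n ∧ (∀ i < n, 1 ≤ S.v (algebraMap K Ω (f.coeff i))) ∧
    S.v (algebraMap K Ω (f.coeff 0)) = 1

/-- The `i`-th coefficient of the ramification polynomial `ρ(x) = f(αx+α)/αⁿ` of `f`,
namely `ρ_i = ∑_{k=i}^n C(k,i) f_k α^{k-n}`. -/
noncomputable def PadicSetup.rho (S : PadicSetup p K Ω) (f : K[X]) (n : ℕ) (α : Ω)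
    (i : ℕ) : Ω :=
  ∑ k ∈ Finset.Icc i n, (k.choose i : Ω) * algebraMap K Ω (f.coeff k) * α ^ ((k : ℤ) - (n : ℤ))

namespace PadicSetup

variable (S : PadicSetup p K Ω)

lemma v_zero : S.v 0 = ⊤ := (S.v_top_iff 0).2 rfl

lemma v_ne_top {x : Ω} (hx : x ≠ 0) : S.v x ≠ ⊤ := fun hh => hx ((S.v_top_iff x).1 hh)

lemma v_one : S.v 1 = 0 := by
  have h := S.v_mul 1 1
  rw [one_mul] at h
  obtain ⟨a, ha⟩ := WithTop.ne_top_iff_exists.1 (S.v_ne_top (one_ne_zero : (1:Ω) ≠ 0))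
  rw [← ha] at h ⊢
  have ha2 : a = a + a := by exact_mod_cast h
  have : a = 0 := by linarith
  simp [this]

lemma v_neg (x : Ω) : S.v (-x) = S.v x := by
  have h1 : S.v (-1 : Ω) = 0 := by
    have h := S.v_mul (-1) (-1)
    rw [neg_mul_neg, one_mul, S.v_one] at h
    obtain ⟨a, ha⟩ := WithTop.ne_top_iff_exists.1
      (S.v_ne_top (neg_ne_zero.2 (one_ne_zero : (1:Ω) ≠ 0)))
    rw [← ha] at h ⊢
    have ha2 : (0:ℚ) = a + a := by exact_mod_cast h
    have : a = 0 := by linarith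
    simp [this]
  have := S.v_mul (-1) x
  rwa [neg_one_mul, h1, zero_add] at this

lemma v_inv {x : Ω} (hx : x ≠ 0) {a : ℚ} (h : S.v x = (a : ℚ)) :
    S.v x⁻¹ = ((-a : ℚ) : WithTop ℚ) := by
  have hm := S.v_mul x x⁻¹
  rw [mul_inv_cancel₀ hx, S.v_one, h] at hm
  obtain ⟨b, hb⟩ := WithTop.ne_top_iff_exists.1 (S.v_ne_top (inv_ne_zero hx))
  rw [← hb] at hm ⊢
  have hb2 : (0:ℚ) = a + b := by exact_mod_cast hm
  have : b = -a := by linarith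
  rw [this]

lemma v_pow {x : Ω} {a : ℚ} (h : S.v x = (a : ℚ)) (k : ℕ) :
    S.v (x ^ k) = ((k * a : ℚ) : WithTop ℚ) := by
  induction k with
  | zero => simpa using S.v_one
  | succ k ih =>
    rw [pow_succ, S.v_mul, ih, h, ← WithTop.coe_add]
    norm_cast
    push_cast
    ring

lemma v_zpow {x : Ω} (hx : x ≠ 0) {a : ℚ} (h : S.v x = (a : ℚ)) (z : ℤ) :
    S.v (x ^ z) = ((z * a : ℚ) : WithTop ℚ) := by
  rcases z with k | k
  · rw [Int.ofNat_eq_coe, zpow_natCast, S.v_pow h]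
    norm_num
  · rw [zpow_negSucc, S.v_inv (pow_ne_zero _ hx) (S.v_pow h (k+1))]
    congr 1
    push_cast
    ring

lemma v_sum {ι : Type*} (s : Finset ι) (g : ι → Ω) (c : WithTop ℚ)
    (hg : ∀ i ∈ s, c ≤ S.v (g i)) : c ≤ S.v (∑ i ∈ s, g i) := by
  classical
  induction s using Finset.induction_on with
  | empty => simp [S.v_zero]
  | @insert i s' hni ih =>
    rw [Finset.sum_insert hni]
    refine le_trans ?_ (S.v_add _ _)
    exact le_min (hg i (Finset.mem_insert_self i s'))
      (ih fun j hj => hg j (Finset.mem_insert_of_mem hj))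

end PadicSetup
lemma coeff_sum_C_mul_X_pow {κ : Type*} [Semiring κ] (N : ℕ) (c : ℕ → κ) (k : ℕ) :
    (∑ j ∈ Finset.range N, C (c j) * X ^ j).coeff k = if k < N then c k else 0 := by
  rw [finset_sum_coeff]
  simp only [coeff_C_mul, coeff_X_pow, mul_ite, mul_one, mul_zero]
  rw [Finset.sum_ite_eq (Finset.range N) k c]
  simp [Finset.mem_range]

namespace PadicSetup

lemma v_alpha (S : PadicSetup p K Ω) {f : K[X]} {n : ℕ} (hn : 0 < n)
    (hf : S.IsEisensteinOfDegree f n) {α : Ω} (hα : aeval α f = 0) (hαne : α ≠ 0) :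
    S.v α = ((1 / n : ℚ) : WithTop ℚ) := by
  obtain ⟨hmon, hdeg, hcoef, hc0⟩ := hf
  obtain ⟨a, ha⟩ := WithTop.ne_top_iff_exists.1 (S.v_ne_top hαne)
  have hnq : (0:ℚ) < (n:ℚ) := by exact_mod_cast hn
  have hn1 : (1:ℚ) ≤ (n:ℚ) := by exact_mod_cast hn
  have hsum : (0:Ω) = ∑ i ∈ Finset.range (n+1), algebraMap K Ω (f.coeff i) * α ^ i := by
    rw [← hα, Polynomial.aeval_eq_sum_range' (by omega : f.natDegree < n+1)]
    exact Finset.sum_congr rfl fun i _ => by rw [Algebra.smul_def]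
  have hcn : f.coeff n = 1 := by rw [← hdeg]; exact hmon.coeff_natDegree
  have hterm : ∀ i < n, (((1 + i * a : ℚ)) : WithTop ℚ) ≤
      S.v (algebraMap K Ω (f.coeff i) * α ^ i) := by
    intro i hi
    by_cases hz : f.coeff i = 0
    · simp [hz, S.v_zero]
    · rw [S.v_mul, S.v_pow ha.symm]
      calc (((1 + i * a : ℚ)) : WithTop ℚ) = 1 + ((i * a : ℚ) : WithTop ℚ) := by
            norm_cast
        _ ≤ S.v (algebraMap K Ω (f.coeff i)) + ((i * a : ℚ) : WithTop ℚ) :=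
            add_le_add_left (hcoef i hi) _
  rcases lt_trichotomy ((n:ℚ) * a) 1 with hlt | heq | hgt
  · exfalso
    have hsplit : α ^ n = -∑ i ∈ Finset.range n, algebraMap K Ω (f.coeff i) * α ^ i := by
      have h2 := hsum
      rw [Finset.sum_range_succ, hcn, map_one, one_mul] at h2
      linear_combination -h2
    set c : ℚ := min 1 (1 + ((n:ℚ)-1)*a) with hc
    have hbig : ((c:ℚ) : WithTop ℚ) ≤ S.v (α ^ n) := by
      rw [hsplit, S.v_neg]
      refine S.v_sum _ _ _ fun i hi => ?_
      rw [Finset.mem_range] at hi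
      refine le_trans ?_ (hterm i hi)
      rw [WithTop.coe_le_coe]
      have hile : (i:ℚ) ≤ (n:ℚ) - 1 := by
        have : (i:ℚ) + 1 ≤ (n:ℚ) := by exact_mod_cast hi
        linarith
      rcases le_or_gt 0 a with hge | hlt'
      · refine le_trans (min_le_left _ _) ?_; nlinarith
      · refine le_trans (min_le_right _ _) ?_; nlinarith
    rw [S.v_pow ha.symm, WithTop.coe_le_coe] at hbig
    have h1 : (1:ℚ) > (n:ℚ) * a := hlt
    rcases le_or_gt 0 a with hge | hlt'
    · have : a < 1 := by nlinarith
      have : (1:ℚ) + ((n:ℚ)-1)*a > (n:ℚ)*a := by nlinarith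
      have hc1 : c > (n:ℚ)*a := lt_min (by nlinarith) this
      linarith
    · have hc1 : c > (n:ℚ)*a := lt_min (by nlinarith) (by nlinarith)
      linarith
  · have : a = 1/(n:ℚ) := by field_simp; linarith
    rw [← ha, this]
  · exfalso
    have hapos : 0 < a := by nlinarith
    have hsplit0 : algebraMap K Ω (f.coeff 0) =
        -∑ i ∈ Finset.range n, algebraMap K Ω (f.coeff (i+1)) * α ^ (i+1) := by
      have h2 := hsum
      rw [Finset.sum_range_succ'] at h2
      rw [pow_zero, mul_one] at h2
      linear_combination -h2
    set c : ℚ := min (1 + a) ((n:ℚ)*a) with hc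
    have hbig : ((c:ℚ) : WithTop ℚ) ≤ S.v (algebraMap K Ω (f.coeff 0)) := by
      rw [hsplit0, S.v_neg]
      refine S.v_sum _ _ _ fun i hi => ?_
      rw [Finset.mem_range] at hi
      by_cases hin : i + 1 = n
      · rw [hin, hcn, map_one, one_mul, S.v_pow ha.symm, WithTop.coe_le_coe]
        exact min_le_right _ _
      · refine le_trans ?_ (hterm (i+1) (by omega))
        rw [WithTop.coe_le_coe]
        refine le_trans (min_le_left _ _) ?_
        have : (1:ℚ) ≤ ((i+1 : ℕ):ℚ) := by exact_mod_cast Nat.one_le_iff_ne_zero.2 (by omega)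
        nlinarith
    rw [hc0] at hbig
    have hle1 : c ≤ 1 := by exact_mod_cast hbig
    have : (1:ℚ) < c := lt_min (by linarith) hgt
    linarith

lemma rho_top (S : PadicSetup p K Ω) {f : K[X]} {n : ℕ}
    (hmon : f.Monic) (hdeg : f.natDegree = n) (α : Ω) : S.rho f n α n = 1 := by
  have hcn : f.coeff n = 1 := by rw [← hdeg]; exact hmon.coeff_natDegree
  rw [PadicSetup.rho, Finset.Icc_self, Finset.sum_singleton, hcn, Nat.choose_self, sub_self,
    zpow_zero, map_one]
  ring

end PadicSetup
/-- Let `f` be Eisenstein of degree `n` over `K` with root `α`, and let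
the ramification polygon of `f` (the Newton polygon of `ρ(x) = f(αx+α)/αⁿ` w.r.t.
`v_α = n·v`) have segments `S_1, …, S_ℓ` with vertex abscissas `1 = x 0 < … < x ℓ = n`,
ordinates `m t = v_α(ρ_{x t})`, slopes `-h t / e t` in lowest terms (strictly increasing),
and residual polynomials `A t ∈ κ[x]`.  Then `A ℓ` is monic, and for `1 ≤ t < ℓ` the
leading coefficient of `A t` equals the constant coefficient of `A (t+1)`. -/
theorem ramification_polygon_residual_polynomials_compatible
    [FiniteDimensional ℚ_[p] K] [IsAlgClosed Ω] [Algebra.IsAlgebraic K Ω]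
    (S : PadicSetup p K Ω)
    (κ : Type*) [Field κ] (res : Ω → κ)
    (res_add : ∀ x y : Ω, 0 ≤ S.v x → 0 ≤ S.v y → res (x + y) = res x + res y)
    (res_mul : ∀ x y : Ω, 0 ≤ S.v x → 0 ≤ S.v y → res (x * y) = res x * res y)
    (res_one : res 1 = 1)
    (res_zero_iff : ∀ x : Ω, 0 ≤ S.v x → (res x = 0 ↔ 0 < S.v x))
    (f : K[X]) (n : ℕ) (hn : 0 < n) (hf : S.IsEisensteinOfDegree f n)
    (α : Ω) (hα : aeval α f = 0)
    (ℓ : ℕ) (hℓ : 1 ≤ ℓ)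
    (x : ℕ → ℕ) (hxmono : ∀ t < ℓ, x t < x (t + 1)) (hx0 : x 0 = 1) (hxlast : x ℓ = n)
    (m : ℕ → ℤ)
    (hm : ∀ t ≤ ℓ, ((n : ℚ) : WithTop ℚ) * S.v (S.rho f n α (x t)) = ((m t : ℚ) : WithTop ℚ))
    (h e : ℕ → ℕ)
    (hcop : ∀ t, 1 ≤ t → t ≤ ℓ → 0 < e t ∧ Nat.Coprime (h t) (e t))
    (hslope : ∀ t, 1 ≤ t → t ≤ ℓ →
      (e t : ℤ) * (m (t - 1) - m t) = (h t : ℤ) * ((x t : ℤ) - (x (t - 1) : ℤ)))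
    (habove : ∀ t, 1 ≤ t → t ≤ ℓ → ∀ i, x (t - 1) ≤ i → i ≤ x t →
      ((((m (t - 1) : ℚ) - ((h t : ℚ) / (e t : ℚ)) * ((i : ℚ) - (x (t - 1) : ℚ))) : ℚ) : WithTop ℚ)
        ≤ ((n : ℚ) : WithTop ℚ) * S.v (S.rho f n α i))
    (hconvex : ∀ t, 1 ≤ t → t < ℓ → h (t + 1) * e t < h t * e (t + 1))
    (A : ℕ → Polynomial κ)
    (hA : ∀ t, 1 ≤ t → t ≤ ℓ →
      A t = ∑ j ∈ Finset.range ((x t - x (t - 1)) / e t + 1),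
        C (res (S.rho f n α (x (t - 1) + j * e t) * α ^ ((j : ℤ) * (h t : ℤ) - m (t - 1))))
          * X ^ j) :
    (∀ t, 1 ≤ t → t < ℓ → (A t).leadingCoeff = (A (t + 1)).coeff 0) ∧ (A ℓ).Monic := by
  classical
  obtain ⟨hmon, hdeg, hcoef, hc0⟩ := hf
  have hαne : α ≠ 0 := by
    intro h0
    rw [h0] at hα
    have hz : f.coeff 0 = 0 := by
      rw [Polynomial.aeval_def, Polynomial.eval₂_at_zero] at hα
      exact (_root_.map_eq_zero (algebraMap K Ω)).1 hα
    rw [hz, map_zero, S.v_zero] at hc0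
    exact (by simp : (⊤ : WithTop ℚ) ≠ 1) hc0
  have hva : S.v α = ((1/(n:ℚ) : ℚ) : WithTop ℚ) :=
    S.v_alpha hn ⟨hmon, hdeg, hcoef, hc0⟩ hα hαne
  have hnq : ((n:ℚ)) ≠ 0 := (Nat.cast_pos.2 hn).ne'
  have hvrho : ∀ t ≤ ℓ, S.v (S.rho f n α (x t)) = (((m t : ℚ)/(n:ℚ) : ℚ) : WithTop ℚ) := by
    intro t ht
    have h2 := hm t ht
    have hne : S.v (S.rho f n α (x t)) ≠ ⊤ := by
      intro htop
      rw [htop, WithTop.mul_top (by exact_mod_cast hnq : ((n:ℚ) : WithTop ℚ) ≠ 0)] at h2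
      exact (WithTop.top_ne_coe) h2
    obtain ⟨b, hb⟩ := WithTop.ne_top_iff_exists.1 hne
    rw [← hb, ← WithTop.coe_mul, WithTop.coe_eq_coe] at h2
    rw [← hb, WithTop.coe_eq_coe]
    field_simp
    linarith
  have key : ∀ t, 1 ≤ t → t ≤ ℓ →
      S.v (S.rho f n α (x t) * α ^ (-(m t))) = 0 ∧
      (A t).natDegree = (x t - x (t-1)) / e t ∧
      (A t).leadingCoeff = res (S.rho f n α (x t) * α ^ (-(m t))) := by
    intro t h1t h2t
    have hxl : x (t-1) < x t := by
      have h3 := hxmono (t-1) (by omega)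
      rwa [show t - 1 + 1 = t by omega] at h3
    obtain ⟨hepos, hcp⟩ := hcop t h1t h2t
    have hs := hslope t h1t h2t
    set L := x t - x (t-1) with hL
    have hLz : (L:ℤ) = (x t : ℤ) - (x (t-1) : ℤ) := by omega
    have hdvd : e t ∣ L := by
      have hdz : (e t : ℤ) ∣ (h t : ℤ) * (L : ℤ) := by
        refine ⟨m (t-1) - m t, ?_⟩
        rw [hLz]
        exact hs.symm
      have hdn : e t ∣ h t * L := by exact_mod_cast hdz
      exact hcp.symm.dvd_of_dvd_mul_left hdn
    set d := L / e t with hd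
    have hde : d * e t = L := Nat.div_mul_cancel hdvd
    have hdeZ : (d:ℤ) * (e t:ℤ) = (x t : ℤ) - (x (t-1) : ℤ) := by
      rw [← hLz]; exact_mod_cast hde
    have hdh : m (t-1) - m t = (d:ℤ) * (h t:ℤ) := by
      have h2 : (e t:ℤ) * (m (t-1) - m t) = (e t:ℤ) * ((d:ℤ) * (h t:ℤ)) := by
        rw [hs, ← hdeZ]; ring
      exact mul_left_cancel₀ (by exact_mod_cast hepos.ne' : (e t:ℤ) ≠ 0) h2
    have hvp : S.v (S.rho f n α (x t) * α ^ (-(m t))) = 0 := by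
      rw [S.v_mul, hvrho t h2t, S.v_zpow hαne hva, ← WithTop.coe_add,
        show (m t:ℚ)/(n:ℚ) + ((-(m t):ℤ):ℚ) * (1/(n:ℚ)) = 0 by push_cast; field_simp; ring,
        WithTop.coe_zero]
    have hres : res (S.rho f n α (x t) * α ^ (-(m t))) ≠ 0 := by
      intro h0
      have h5 := (res_zero_iff _ (le_of_eq hvp.symm)).1 h0
      rw [hvp] at h5; exact lt_irrefl _ h5
    have hAt := hA t h1t h2t
    rw [← hL, ← hd] at hAt
    have hcoeffAt : ∀ k, (A t).coeff k =
        if k < d + 1 then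
          res (S.rho f n α (x (t-1) + k * e t) * α ^ ((k:ℤ) * (h t:ℤ) - m (t-1)))
        else 0 := by
      intro k
      rw [hAt, coeff_sum_C_mul_X_pow]
    have hidx : x (t-1) + d * e t = x t := by rw [hde]; omega
    have hexp : (d:ℤ) * ((h t):ℤ) - m (t-1) = -(m t) := by rw [← hdh]; ring
    have hcd : (A t).coeff d = res (S.rho f n α (x t) * α ^ (-(m t))) := by
      rw [hcoeffAt d, if_pos (Nat.lt_succ_self d), hidx, hexp]
    have hnd : (A t).natDegree = d := by
      apply le_antisymm
      · apply Polynomial.natDegree_le_iff_coeff_eq_zero.2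
        intro k hk
        rw [hcoeffAt k, if_neg (by omega)]
      · apply Polynomial.le_natDegree_of_ne_zero
        rw [hcd]; exact hres
    exact ⟨hvp, hnd, by rw [Polynomial.leadingCoeff, hnd, hcd]⟩
  constructor
  · intro t h1t hlt
    obtain ⟨hvp, hnd, hlc⟩ := key t h1t hlt.le
    rw [hlc]
    have hAt1 := hA (t+1) (by omega) (by omega)
    rw [hAt1, coeff_sum_C_mul_X_pow, if_pos (Nat.succ_pos _)]
    norm_num
  · obtain ⟨hvp, hnd, hlc⟩ := key ℓ hℓ le_rfl
    have hrho1 : S.rho f n α (x ℓ) = 1 := by rw [hxlast]; exact S.rho_top hmon hdeg α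
    have hmℓ : m ℓ = 0 := by
      have h2 := hm ℓ le_rfl
      rw [hrho1, S.v_one, mul_zero] at h2
      exact_mod_cast h2.symm
    show (A ℓ).leadingCoeff = 1
    rw [hlc, hmℓ, hrho1, neg_zero, zpow_zero, one_mul, res_one]
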